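/- Let V₅ = {(x₀,x₁,x₂,x₃,x₄) ∈ (ℂˣ)⁵ : x_{i−1}·x_{i+1} = 1 + x_i for all i ∈ ℤ/5}. Then the map (x₀,x₁,x₂,x₃,x₄) ↦ (X,Y,Z,W) = (x₃, x₁, x₀, x₂) is a bijection from V₅ onto {(X,Y,Z,W) ∈ (ℂˣ)⁴ : XY = 1 + W, ZW = 1 + Y, and X ≠ −1}, with inverse given by x₀ = Z, x₁ = Y, x₂ = W, x₃ = X, x₄ = (1+X)/W. -/

import Mathlib

/-- The 'democratic' Fock–Goncharov realization of the Argyres–Douglas moduli space: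
5-periodic solutions of the Y-system with all coordinates nonzero. -/
def V5 : Set (Fin 5 → ℂ) :=
  {x | (∀ i, x i ≠ 0) ∧ ∀ i, x (i - 1) * x (i + 1) = 1 + x i}

/-- The generic fiber of the Gross–Siebert toric degeneration (with `X ≠ -1`). -/
def W5 : Set (ℂ × ℂ × ℂ × ℂ) :=
  {p | (p.1 ≠ 0 ∧ p.2.1 ≠ 0 ∧ p.2.2.1 ≠ 0 ∧ p.2.2.2 ≠ 0) ∧
    p.1 * p.2.1 = 1 + p.2.2.2 ∧ p.2.2.1 * p.2.2.2 = 1 + p.2.1 ∧ p.1 ≠ -1}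

/-- The map `(x₀,…,x₄) ↦ (X,Y,Z,W) = (x₃, x₁, x₀, x₂)`. -/
def F5map (x : Fin 5 → ℂ) : ℂ × ℂ × ℂ × ℂ := (x 3, x 1, x 0, x 2)

/-- The inverse map `x₀ = Z, x₁ = Y, x₂ = W, x₃ = X, x₄ = (1+X)/W`. -/
noncomputable def G5map (p : ℂ × ℂ × ℂ × ℂ) : Fin 5 → ℂ :=
  ![p.2.2.1, p.2.1, p.2.2.2, p.1, (1 + p.1) / p.2.2.2]

lemma G5_left_inv : ∀ x ∈ V5, G5map (F5map x) = x := by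
  rintro x ⟨hne, heq⟩
  have h3 := heq 3
  norm_num at h3
  change x 2 * x 4 = 1 + x 3 at h3
  -- h3 : x 2 * x 4 = 1 + x 3
  funext i
  fin_cases i <;> simp [G5map, F5map]
  rw [← h3, mul_comm, mul_div_assoc, div_self (hne 2), mul_one]

lemma G5_maps : ∀ p ∈ W5, G5map p ∈ V5 := by
  rintro ⟨X, Y, Z, W⟩ ⟨⟨hX, hY, hZ, hW⟩, e1, e2, hX1⟩
  have h1X : 1 + X ≠ 0 := fun h => hX1 (by linear_combination h)
  have h4 : (1 + X) / W ≠ 0 := div_ne_zero h1X hW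
  constructor
  · intro i; fin_cases i
    · exact hZ
    · exact hY
    · exact hW
    · exact hX
    · exact h4
  · intro i; fin_cases i
    · show (1 + X) / W * Y = 1 + Z
      field_simp; linear_combination e1 - e2
    · show Z * W = 1 + Y
      exact e2
    · show Y * X = 1 + W
      linear_combination e1
    · show W * ((1 + X) / W) = 1 + X
      field_simp
    · show X * Z = 1 + (1 + X) / W
      field_simp; linear_combination X * e2 + e1

theorem fockGoncharov_realization_bijection :
    Set.BijOn F5map V5 W5 ∧ (∀ x ∈ V5, G5map (F5map x) = x) ∧
      ∀ p ∈ W5, F5map (G5map p) = p := by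
  have hri : ∀ p ∈ W5, F5map (G5map p) = p := by
    rintro ⟨X, Y, Z, W⟩ _
    simp [F5map, G5map]
  refine ⟨⟨?_, ?_, ?_⟩, G5_left_inv, hri⟩
  · rintro x ⟨hne, heq⟩
    have h1 := heq 1
    have h2 := heq 2
    have h3 := heq 3
    norm_num at h1 h2 h3
    change x 0 * x 2 = 1 + x 1 at h1
    change x 1 * x 3 = 1 + x 2 at h2
    change x 2 * x 4 = 1 + x 3 at h3
    refine ⟨⟨hne 3, hne 1, hne 0, hne 2⟩, ?_, ?_, ?_⟩
    · simpa [F5map, mul_comm] using h2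
    · simpa [F5map] using h1
    · simp only [F5map]
      intro h
      have hz : x 2 * x 4 = 0 := by rw [h3, h]; ring
      rcases mul_eq_zero.mp hz with h' | h'
      · exact hne 2 h'
      · exact hne 4 h'
  · intro a ha b hb hab
    rw [← G5_left_inv a ha, ← G5_left_inv b hb, hab]
  · intro p hp
    exact ⟨G5map p, G5_maps p hp, hri p hp⟩
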